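/- Let D be a set, T : D³ → D³ a tetrahedron map, and σ : D → D a map with σ ∘ σ = id_D and (σ×σ×σ) ∘ T ∘ (σ×σ×σ) = T. Then the maps T̃ = (σ×id_D×σ) ∘ T ∘ (id_D×σ×id_D) and T̂ = (id_D×σ×id_D) ∘ T ∘ (σ×id_D×σ) are tetrahedron maps. -/
import Mathlib

/-- `T` acting on factors 1,2,3 of the sixfold Cartesian product `D⁶`. -/
def tetra123 {D : Type*} (T : D × D × D → D × D × D) :
    D × D × D × D × D × D → D × D × D × D × D × D :=
  fun q =>
    match q with
    | (x, y, z, r, s, t) =>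
      ((T (x, y, z)).1, (T (x, y, z)).2.1, (T (x, y, z)).2.2, r, s, t)

/-- `T` acting on factors 1,4,5 of the sixfold Cartesian product `D⁶`. -/
def tetra145 {D : Type*} (T : D × D × D → D × D × D) :
    D × D × D × D × D × D → D × D × D × D × D × D :=
  fun q =>
    match q with
    | (x, y, z, r, s, t) =>
      ((T (x, r, s)).1, y, z, (T (x, r, s)).2.1, (T (x, r, s)).2.2, t)

/-- `T` acting on factors 2,4,6 of the sixfold Cartesian product `D⁶`. -/
def tetra246 {D : Type*} (T : D × D × D → D × D × D) :
    D × D × D × D × D × D → D × D × D × D × D × D :=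
  fun q =>
    match q with
    | (x, y, z, r, s, t) =>
      (x, (T (y, r, t)).1, z, (T (y, r, t)).2.1, s, (T (y, r, t)).2.2)

/-- `T` acting on factors 3,5,6 of the sixfold Cartesian product `D⁶`. -/
def tetra356 {D : Type*} (T : D × D × D → D × D × D) :
    D × D × D × D × D × D → D × D × D × D × D × D :=
  fun q =>
    match q with
    | (x, y, z, r, s, t) =>
      (x, y, (T (z, s, t)).1, r, (T (z, s, t)).2.1, (T (z, s, t)).2.2)

/-- The (Zamolodchikov) tetrahedron equation for a map `T : D³ → D³`. -/
def IsTetrahedronMap {D : Type*} (T : D × D × D → D × D × D) : Prop :=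
  tetra123 T ∘ tetra145 T ∘ tetra246 T ∘ tetra356 T =
    tetra356 T ∘ tetra246 T ∘ tetra145 T ∘ tetra123 T

section Aux

variable {D : Type*} (T : D × D × D → D × D × D) (σ : D → D)

private lemma key_tetra
    (hσ : ∀ a, σ (σ a) = a)
    (hs1 : ∀ a b c : D, σ (T (a, b, c)).1 = (T (σ a, σ b, σ c)).1)
    (hs2 : ∀ a b c : D, σ (T (a, b, c)).2.1 = (T (σ a, σ b, σ c)).2.1)
    (hs3 : ∀ a b c : D, σ (T (a, b, c)).2.2 = (T (σ a, σ b, σ c)).2.2)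
    (hT : IsTetrahedronMap T) :
    IsTetrahedronMap
      ((fun q : D × D × D => (σ q.1, q.2.1, σ q.2.2)) ∘ T ∘
        (fun q : D × D × D => (q.1, σ q.2.1, q.2.2))) := by
  set Tt := ((fun q : D × D × D => (σ q.1, q.2.1, σ q.2.2)) ∘ T ∘
      (fun q : D × D × D => (q.1, σ q.2.1, q.2.2))) with hTt
  set g : D × D × D × D × D × D → D × D × D × D × D × D :=
    fun q => (q.1, σ q.2.1, q.2.2.1, q.2.2.2.1, σ q.2.2.2.2.1, q.2.2.2.2.2) with hg
  have hL : tetra123 Tt ∘ tetra145 Tt ∘ tetra246 Tt ∘ tetra356 Tt =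
      g ∘ (tetra123 T ∘ tetra145 T ∘ tetra246 T ∘ tetra356 T) ∘ g := by
    funext p
    obtain ⟨x, y, z, r, s, t⟩ := p
    simp only [hTt, hg, tetra123, tetra145, tetra246, tetra356, Function.comp_apply,
      hs1, hs2, hs3, hσ]
  have hR : tetra356 Tt ∘ tetra246 Tt ∘ tetra145 Tt ∘ tetra123 Tt =
      g ∘ (tetra356 T ∘ tetra246 T ∘ tetra145 T ∘ tetra123 T) ∘ g := by
    funext p
    obtain ⟨x, y, z, r, s, t⟩ := p
    simp only [hTt, hg, tetra123, tetra145, tetra246, tetra356, Function.comp_apply,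
      hs1, hs2, hs3, hσ]
  unfold IsTetrahedronMap
  rw [hL, hR, hT]

end Aux

theorem stmt_1 {D : Type*} (T : D × D × D → D × D × D) (σ : D → D)
    (hT : IsTetrahedronMap T)
    (hinv : σ ∘ σ = id)
    (hsym : (fun q : D × D × D => (σ q.1, σ q.2.1, σ q.2.2)) ∘ T ∘
        (fun q : D × D × D => (σ q.1, σ q.2.1, σ q.2.2)) = T) :
    IsTetrahedronMap
      ((fun q : D × D × D => (σ q.1, q.2.1, σ q.2.2)) ∘ T ∘
        (fun q : D × D × D => (q.1, σ q.2.1, q.2.2))) ∧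
    IsTetrahedronMap
      ((fun q : D × D × D => (q.1, σ q.2.1, q.2.2)) ∘ T ∘
        (fun q : D × D × D => (σ q.1, q.2.1, σ q.2.2))) := by
  have hσ : ∀ a, σ (σ a) = a := fun a => congrFun hinv a
  -- pointwise form of the symmetry: T (σa, σb, σc) = σ³ (T (a,b,c))
  have hs : ∀ a b c : D, T (σ a, σ b, σ c) =
      (σ (T (a, b, c)).1, σ (T (a, b, c)).2.1, σ (T (a, b, c)).2.2) := by
    intro a b c
    have h1 := congrFun hsym (σ a, σ b, σ c)
    simp only [Function.comp_apply, hσ] at h1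
    rw [← h1]
  have hs1 : ∀ a b c : D, σ (T (a, b, c)).1 = (T (σ a, σ b, σ c)).1 := by
    intro a b c; rw [hs]
  have hs2 : ∀ a b c : D, σ (T (a, b, c)).2.1 = (T (σ a, σ b, σ c)).2.1 := by
    intro a b c; rw [hs]
  have hs3 : ∀ a b c : D, σ (T (a, b, c)).2.2 = (T (σ a, σ b, σ c)).2.2 := by
    intro a b c; rw [hs]
  have hkey := key_tetra T σ hσ hs1 hs2 hs3 hT
  refine ⟨hkey, ?_⟩
  have heq : ((fun q : D × D × D => (q.1, σ q.2.1, q.2.2)) ∘ T ∘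
        (fun q : D × D × D => (σ q.1, q.2.1, σ q.2.2))) =
      ((fun q : D × D × D => (σ q.1, q.2.1, σ q.2.2)) ∘ T ∘
        (fun q : D × D × D => (q.1, σ q.2.1, q.2.2))) := by
    funext q
    obtain ⟨a, b, c⟩ := q
    simp only [Function.comp_apply]
    rw [show ((σ a, b, σ c) : D × D × D) = (σ a, σ (σ b), σ c) by rw [hσ], hs]
    simp only [hσ, hs1, hs2, hs3]
  rw [heq]
  exact hkey
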